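/- Let $\mathbf{P}$ be an $m \times m$ permutation matrix, $\boldsymbol{\tau} \in \mathbb{R}^m$, $\bar{\boldsymbol{\Gamma}}$ an $m\times m$ positive-definite matrix, $\boldsymbol{\Delta}$ a $d \times m$ matrix, and $\bar{\boldsymbol{\Omega}}$ a $d\times d$ positive-definite matrix. Set $\boldsymbol{\Delta}_p = \boldsymbol{\Delta}\mathbf{P}^\top$, $\boldsymbol{\tau}_p = \mathbf{P}\boldsymbol{\tau}$, $\bar{\boldsymbol{\Gamma}}_p = \mathbf{P}\bar{\boldsymbol{\Gamma}}\mathbf{P}^\top$. Then: (i) $\bar{\boldsymbol{\Gamma}}_p - \boldsymbol{\Delta}_p^\top\bar{\boldsymbol{\Omega}}^{-1}\boldsymbol{\Delta}_p = \mathbf{P}(\bar{\boldsymbol{\Gamma}} - \boldsymbol{\Delta}^\top\bar{\boldsymbol{\Omega}}^{-1}\boldsymbol{\Delta})\mathbf{P}^\top$; (ii) $\boldsymbol{\tau}_p + \boldsymbol{\Delta}_p^\top\bar{\boldsymbol{\Omega}}^{-1}\mathbf{x} = \mathbf{P}(\boldsymbol{\tau} + \boldsymbol{\Delta}^\top\bar{\boldsymbol{\Omega}}^{-1}\mathbf{x})$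 for all $\mathbf{x} \in \mathbb{R}^d$; and (iii) for any function $G$ on $\mathbb{R}^m \times \{\text{pos.\,def.\ }m\times m\text{ matrices}\}$ invariant under simultaneous permutation, i.e., $G(\mathbf{P}\mathbf{v}, \mathbf{P}\mathbf{M}\mathbf{P}^\top) = G(\mathbf{v},\mathbf{M})$, the SUT density factor $G\{\boldsymbol{\tau}_p + \boldsymbol{\Delta}_p^\top\bar{\boldsymbol{\Omega}}^{-1}\mathbf{x},\ \bar{\boldsymbol{\Gamma}}_p - \boldsymbol{\Delta}_p^\top\bar{\boldsymbol{\Omega}}^{-1}\boldsymbol{\Delta}_p\}$ equals $G\{\boldsymbol{\tau} + \boldsymbol{\Delta}^\top\bar{\boldsymbol{\Omega}}^{-1}\mathbf{x},\ \bar{\boldsymbol{\Gamma}} - \boldsymbol{\Delta}^\top\bar{\boldsymbol{\Omega}}^{-1}\boldsymbol{\Delta}\}$, establishing non-identifiability of the SUT parameters under latent permutations. -/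
import Mathlib


open Matrix

theorem stmt17 {m d : ℕ} (σ : Equiv.Perm (Fin m))
    (Pm : Matrix (Fin m) (Fin m) ℝ)
    (hPm : Pm = (σ.toPEquiv.toMatrix : Matrix (Fin m) (Fin m) ℝ))
    (τ : Fin m → ℝ) (Γ : Matrix (Fin m) (Fin m) ℝ) (hΓ : Γ.PosDef)
    (Δ : Matrix (Fin d) (Fin m) ℝ) (Ωb : Matrix (Fin d) (Fin d) ℝ) (hΩ : Ωb.PosDef)
    (hres : (Γ - Δᵀ * Ωb⁻¹ * Δ).PosDef) :
    -- (i)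
    (Pm * Γ * Pmᵀ - (Δ * Pmᵀ)ᵀ * Ωb⁻¹ * (Δ * Pmᵀ) = Pm * (Γ - Δᵀ * Ωb⁻¹ * Δ) * Pmᵀ) ∧
    -- (ii)
    (∀ x : Fin d → ℝ, Pm *ᵥ τ + (Δ * Pmᵀ)ᵀ *ᵥ (Ωb⁻¹ *ᵥ x) =
      Pm *ᵥ (τ + Δᵀ *ᵥ (Ωb⁻¹ *ᵥ x))) ∧
    -- (iii)
    (∀ G : (Fin m → ℝ) → Matrix (Fin m) (Fin m) ℝ → ℝ,
      (∀ (v : Fin m → ℝ) (M : Matrix (Fin m) (Fin m) ℝ), M.PosDef →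
        G (Pm *ᵥ v) (Pm * M * Pmᵀ) = G v M) →
      ∀ x : Fin d → ℝ,
        G (Pm *ᵥ τ + (Δ * Pmᵀ)ᵀ *ᵥ (Ωb⁻¹ *ᵥ x))
            (Pm * Γ * Pmᵀ - (Δ * Pmᵀ)ᵀ * Ωb⁻¹ * (Δ * Pmᵀ)) =
          G (τ + Δᵀ *ᵥ (Ωb⁻¹ *ᵥ x)) (Γ - Δᵀ * Ωb⁻¹ * Δ)) := by
  have hi : Pm * Γ * Pmᵀ - (Δ * Pmᵀ)ᵀ * Ωb⁻¹ * (Δ * Pmᵀ)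
      = Pm * (Γ - Δᵀ * Ωb⁻¹ * Δ) * Pmᵀ := by
    simp only [transpose_mul, transpose_transpose, Matrix.mul_sub, Matrix.sub_mul,
      Matrix.mul_assoc]
  have hii : ∀ x : Fin d → ℝ, Pm *ᵥ τ + (Δ * Pmᵀ)ᵀ *ᵥ (Ωb⁻¹ *ᵥ x) =
      Pm *ᵥ (τ + Δᵀ *ᵥ (Ωb⁻¹ *ᵥ x)) := by
    intro x
    simp only [transpose_mul, transpose_transpose, mulVec_add, ← mulVec_mulVec]
  refine ⟨hi, hii, ?_⟩
  intro G hG x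
  rw [hi, hii x, hG _ _ hres]
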